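/- Let m ≥ 1, a⁺, a⁻ : Fin m → [0,1], and b ∈ (0,1]. Assume a⁻_j ≠ b for every j, and that the equation ⋁_{j} ((a⁺_j · x_j) ⊔ (a⁻_j · n_P(x_j))) = b is solvable. Then the set of minimal solutions is exactly {x^(k) : k ∈ K}, where K = {k : a⁺_k ≥ b and a⁻_j < b for all j ≠ k}, and x^(k) is the tuple with x^(k)_k = b / a⁺_k and x^(k)_j = 0 for j ≠ k. In particular, the number of minimal solutions equals the cardinality of K. -/

import Mathlib

open Set

noncomputable def nP (x : ℝ) : ℝ := if x = 0 then 1 else 0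

noncomputable def resP (z a : ℝ) : ℝ := if a = 0 then 1 else min 1 (z / a)

noncomputable def bSup {m : ℕ} (hm : 1 ≤ m) (f : Fin m → ℝ) : ℝ :=
  Finset.univ.sup' ⟨⟨0, hm⟩, Finset.mem_univ _⟩ f

noncomputable def bInf {m : ℕ} (hm : 1 ≤ m) (f : Fin m → ℝ) : ℝ :=
  Finset.univ.inf' ⟨⟨0, hm⟩, Finset.mem_univ _⟩ f

lemma bSup_eq_iff {m : ℕ} (hm : 1 ≤ m) (f : Fin m → ℝ) (b : ℝ) :
    bSup hm f = b ↔ (∀ j, f j ≤ b) ∧ ∃ j, f j = b := by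
  unfold bSup
  constructor
  · intro h
    refine ⟨fun j => h ▸ Finset.le_sup' f (Finset.mem_univ j), ?_⟩
    obtain ⟨j, -, hj⟩ := Finset.exists_mem_eq_sup' ⟨⟨0, hm⟩, Finset.mem_univ _⟩ f
    exact ⟨j, by rw [← hj, h]⟩
  · rintro ⟨h1, j, hj⟩
    exact le_antisymm (Finset.sup'_le _ _ fun i _ => h1 i) (hj ▸ Finset.le_sup' f (Finset.mem_univ j))

theorem stmt11 (m : ℕ) (hm : 1 ≤ m) (ap am : Fin m → ℝ) (b : ℝ)
    (hap : ∀ j, ap j ∈ Icc (0:ℝ) 1) (ham : ∀ j, am j ∈ Icc (0:ℝ) 1)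
    (hb : b ∈ Ioc (0:ℝ) 1) (hne : ∀ j, am j ≠ b)
    (hsolv : ∃ x : Fin m → ℝ, (∀ j, x j ∈ Icc (0:ℝ) 1) ∧
      bSup hm (fun j => (ap j * x j) ⊔ (am j * nP (x j))) = b) :
    {x : Fin m → ℝ | (∀ j, x j ∈ Icc (0:ℝ) 1) ∧
        bSup hm (fun j => (ap j * x j) ⊔ (am j * nP (x j))) = b ∧
        ∀ y : Fin m → ℝ, (∀ j, y j ∈ Icc (0:ℝ) 1) →
          bSup hm (fun j => (ap j * y j) ⊔ (am j * nP (y j))) = b → ¬ y < x} =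
      (fun k => fun j => if j = k then b / ap k else (0:ℝ)) ''
        {k : Fin m | b ≤ ap k ∧ ∀ j, j ≠ k → am j < b} ∧
    {x : Fin m → ℝ | (∀ j, x j ∈ Icc (0:ℝ) 1) ∧
        bSup hm (fun j => (ap j * x j) ⊔ (am j * nP (x j))) = b ∧
        ∀ y : Fin m → ℝ, (∀ j, y j ∈ Icc (0:ℝ) 1) →
          bSup hm (fun j => (ap j * y j) ⊔ (am j * nP (y j))) = b → ¬ y < x}.ncard =
      {k : Fin m | b ≤ ap k ∧ ∀ j, j ≠ k → am j < b}.ncard := by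
  obtain ⟨hb0, hb1⟩ := hb
  -- term evaluation (value form)
  have hterm : ∀ (v : ℝ) (j : Fin m), 0 ≤ v →
      (ap j * v) ⊔ (am j * nP v) = if v = 0 then am j else ap j * v := by
    intro v j hv
    unfold nP
    by_cases h : v = 0
    · simp [h, max_eq_right (ham j).1]
    · simp [h, max_eq_left (mul_nonneg (hap j).1 hv)]
  have key : {x : Fin m → ℝ | (∀ j, x j ∈ Icc (0:ℝ) 1) ∧
        bSup hm (fun j => (ap j * x j) ⊔ (am j * nP (x j))) = b ∧
        ∀ y : Fin m → ℝ, (∀ j, y j ∈ Icc (0:ℝ) 1) →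
          bSup hm (fun j => (ap j * y j) ⊔ (am j * nP (y j))) = b → ¬ y < x} =
      (fun k => fun j => if j = k then b / ap k else (0:ℝ)) ''
        {k : Fin m | b ≤ ap k ∧ ∀ j, j ≠ k → am j < b} := by
    ext x
    simp only [mem_setOf_eq, mem_image]
    constructor
    · rintro ⟨hx, heq, hmin⟩
      rw [bSup_eq_iff] at heq
      obtain ⟨hle0, k0, hk00⟩ := heq
      have hle : ∀ j, (if x j = 0 then am j else ap j * x j) ≤ b :=
        fun j => (hterm (x j) j (hx j).1) ▸ hle0 j
      have hk0 : (if x k0 = 0 then am k0 else ap k0 * x k0) = b :=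
        (hterm (x k0) k0 (hx k0).1) ▸ hk00
      -- Step A: any positive coordinate j has ap j * x j = b
      have stepA : ∀ j, 0 < x j → ap j * x j = b := by
        intro j hj
        by_contra hne'
        have hlej : ap j * x j ≤ b := by
          have := hle j; rwa [if_neg (ne_of_gt hj)] at this
        have hlt : ap j * x j < b := lt_of_le_of_ne hlej hne'
        have hjnn : 0 ≤ ap j * x j := mul_nonneg (hap j).1 (le_of_lt hj)
        set y := Function.update x j (x j / 2) with hy
        have hyj : y j = x j / 2 := Function.update_self _ _ _
        have hyi : ∀ i, i ≠ j → y i = x i := fun i h => Function.update_of_ne h _ _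
        have hyIcc : ∀ i, y i ∈ Icc (0:ℝ) 1 := by
          intro i
          by_cases hij : i = j
          · subst hij; rw [hyj]; exact ⟨by linarith, by linarith [(hx i).2]⟩
          · rw [hyi i hij]; exact hx i
        have hysol : bSup hm (fun i => (ap i * y i) ⊔ (am i * nP (y i))) = b := by
          rw [bSup_eq_iff]
          constructor
          · intro i
            rw [hterm (y i) i (hyIcc i).1]
            by_cases hij : i = j
            · subst hij
              rw [hyj]
              have hne2 : x i / 2 ≠ 0 := by positivity
              rw [if_neg hne2]
              nlinarith
            · rw [hyi i hij]; exact hle i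
          · refine ⟨k0, ?_⟩
            have hk0j : k0 ≠ j := by
              intro h; subst h
              rw [if_neg (ne_of_gt hj)] at hk0
              exact hne' hk0
            rw [hterm (y k0) k0 (hyIcc k0).1, hyi k0 hk0j]
            exact hk0
        refine hmin y hyIcc hysol ?_
        rw [Pi.lt_def]
        refine ⟨fun i => ?_, j, by rw [hyj]; linarith⟩
        by_cases hij : i = j
        · subst hij; rw [hyj]; linarith
        · rw [hyi i hij]
      -- some coordinate is positive
      have hexpos : ∃ k, 0 < x k := by
        by_contra h
        push_neg at h
        have h0 : x k0 = 0 := le_antisymm (h k0) (hx k0).1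
        rw [if_pos h0] at hk0
        exact hne k0 hk0
      obtain ⟨k, hk⟩ := hexpos
      have hapk : ap k * x k = b := stepA k hk
      -- all other coordinates are zero
      have hzero : ∀ j, j ≠ k → x j = 0 := by
        intro j hjk
        by_contra hj0
        have hj : 0 < x j := lt_of_le_of_ne (hx j).1 (Ne.symm hj0)
        set y := Function.update x j (x j / 2) with hy
        have hyj : y j = x j / 2 := Function.update_self _ _ _
        have hyi : ∀ i, i ≠ j → y i = x i := fun i h => Function.update_of_ne h _ _
        have hyIcc : ∀ i, y i ∈ Icc (0:ℝ) 1 := by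
          intro i
          by_cases hij : i = j
          · subst hij; rw [hyj]; exact ⟨by linarith, by linarith [(hx i).2]⟩
          · rw [hyi i hij]; exact hx i
        have hysol : bSup hm (fun i => (ap i * y i) ⊔ (am i * nP (y i))) = b := by
          rw [bSup_eq_iff]
          constructor
          · intro i
            rw [hterm (y i) i (hyIcc i).1]
            by_cases hij : i = j
            · subst hij
              rw [hyj]
              have hne2 : x i / 2 ≠ 0 := by positivity
              rw [if_neg hne2]
              have hb' := stepA i hj
              nlinarith [(hap i).1]
            · rw [hyi i hij]; exact hle i
          · refine ⟨k, ?_⟩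
            rw [hterm (y k) k (hyIcc k).1, hyi k (fun h => hjk h.symm),
              if_neg (ne_of_gt hk)]
            exact hapk
        refine absurd ?_ (hmin y hyIcc hysol)
        rw [Pi.lt_def]
        refine ⟨fun i => ?_, j, by rw [hyj]; linarith⟩
        by_cases hij : i = j
        · subst hij; rw [hyj]; linarith
        · rw [hyi i hij]
      have hapk0 : 0 < ap k := by
        rcases lt_or_eq_of_le (hap k).1 with h | h
        · exact h
        · exfalso; rw [← h] at hapk; simp at hapk; linarith
      refine ⟨k, ⟨?_, ?_⟩, ?_⟩
      · calc b = ap k * x k := hapk.symm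
          _ ≤ ap k * 1 := by nlinarith [(hx k).2]
          _ = ap k := mul_one _
      · intro j hjk
        have := hle j
        rw [if_pos (hzero j hjk)] at this
        exact lt_of_le_of_ne this (hne j)
      · funext j
        by_cases hjk : j = k
        · subst hjk
          simp only [if_pos rfl, if_true]
          field_simp
          linarith [hapk]
        · simp only [if_neg hjk]
          exact (hzero j hjk).symm
    · rintro ⟨k, ⟨hbk, hamlt⟩, rfl⟩
      have hapk0 : 0 < ap k := lt_of_lt_of_le hb0 hbk
      have hdivpos : 0 < b / ap k := div_pos hb0 hapk0
      have hIcc : ∀ j, (if j = k then b / ap k else (0:ℝ)) ∈ Icc (0:ℝ) 1 := by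
        intro j
        by_cases hjk : j = k
        · rw [if_pos hjk]
          exact ⟨le_of_lt hdivpos, (div_le_one hapk0).2 hbk⟩
        · rw [if_neg hjk]; exact ⟨le_refl _, zero_le_one⟩
      have hsolx : bSup hm (fun j => (ap j * (if j = k then b / ap k else (0:ℝ))) ⊔
          (am j * nP (if j = k then b / ap k else (0:ℝ)))) = b := by
        rw [bSup_eq_iff]
        constructor
        · intro j
          rw [hterm _ j (hIcc j).1]
          by_cases hjk : j = k
          · subst hjk
            simp only [if_pos rfl, if_true]
            rw [if_neg (ne_of_gt hdivpos), mul_div_cancel₀ _ (ne_of_gt hapk0)]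
          · simp only [if_neg hjk, if_pos rfl, if_true]
            exact le_of_lt (hamlt j hjk)
        · refine ⟨k, ?_⟩
          rw [hterm _ k (hIcc k).1]
          simp only [if_pos rfl, if_true]
          rw [if_neg (ne_of_gt hdivpos), mul_div_cancel₀ _ (ne_of_gt hapk0)]
      refine ⟨hIcc, hsolx, ?_⟩
      intro y hy hysol hlt
      rw [Pi.lt_def] at hlt
      obtain ⟨hle', i, hi⟩ := hlt
      have hy0 : ∀ j, j ≠ k → y j = 0 := by
        intro j hjk
        have := hle' j
        simp only [if_neg hjk] at this
        exact le_antisymm this (hy j).1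
      rw [bSup_eq_iff] at hysol
      obtain ⟨hyle0, j0, hj00⟩ := hysol
      have hj0 : (if y j0 = 0 then am j0 else ap j0 * y j0) = b :=
        (hterm (y j0) j0 (hy j0).1) ▸ hj00
      by_cases hyk : y k = 0
      · have hall : ∀ j, y j = 0 := by
          intro j
          by_cases hjk : j = k
          · subst hjk; exact hyk
          · exact hy0 j hjk
        rw [if_pos (hall j0)] at hj0
        exact hne j0 hj0
      · have hykpos : 0 < y k := lt_of_le_of_ne (hy k).1 (Ne.symm hyk)
        have hyklt : y k < b / ap k := by
          have h1 := hle' k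
          simp only [if_pos rfl] at h1
          rcases lt_or_eq_of_le h1 with h | h
          · exact h
          · exfalso
            by_cases hik : i = k
            · subst hik
              simp only [if_pos rfl] at hi
              exact absurd h (ne_of_lt hi)
            · have h2 := hy0 i hik
              simp only [if_neg hik] at hi
              rw [h2] at hi
              exact absurd hi (lt_irrefl 0)
        refine absurd hj0 ?_
        by_cases hj0k : j0 = k
        · subst hj0k
          rw [if_neg hyk]
          have hlt2 : ap j0 * y j0 < b :=
            calc ap j0 * y j0 < ap j0 * (b / ap j0) := mul_lt_mul_of_pos_left hyklt hapk0
              _ = b := mul_div_cancel₀ _ (ne_of_gt hapk0)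
          exact ne_of_lt hlt2
        · rw [hy0 j0 hj0k, if_pos rfl]
          exact hne j0
  refine ⟨key, ?_⟩
  rw [key]
  apply Set.ncard_image_of_injOn
  intro k hk k' hk' hkk'
  by_contra hne'
  have h1 := congrFun hkk' k
  simp only [if_pos rfl, if_neg hne', if_true] at h1
  have hp : 0 < b / ap k := div_pos hb0 (lt_of_lt_of_le hb0 hk.1)
  linarith
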